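/- Let g : ℝ → ℝ be a measurable function with g ≥ 0 almost everywhere on (0,∞) and ∫₀^∞ g(t) dt = 1. Then the integrals ∫₀^∞ |n·g(n t) − g(t)| dt converge to 2 as the positive integer n tends to infinity. -/

import Mathlib

open MeasureTheory Filter
open scoped ENNReal Topology

/-- Change of variables `s = a t` for lower Lebesgue integrals over `Ioi b`. -/
lemma stmt5_scale (F : ℝ → ℝ≥0∞) (hF : Measurable F) {a : ℝ} (ha : 0 < a) (b : ℝ) :
    ∫⁻ t in Set.Ioi b, F (a * t) = ENNReal.ofReal a⁻¹ * ∫⁻ s in Set.Ioi (a * b), F s := by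
  have key : ∀ t : ℝ, (Set.Ioi b).indicator (fun t => F (a * t)) t
      = (Set.Ioi (a * b)).indicator F (a * t) := by
    intro t
    by_cases ht : t ∈ Set.Ioi b
    · rw [Set.indicator_of_mem ht, Set.indicator_of_mem]
      exact Set.mem_Ioi.2 (by exact (mul_lt_mul_iff_right₀ ha).2 ht)
    · rw [Set.indicator_of_notMem ht, Set.indicator_of_notMem]
      intro hcon
      exact ht (Set.mem_Ioi.2 (by exact (mul_lt_mul_iff_right₀ ha).1 hcon))
  calc ∫⁻ t in Set.Ioi b, F (a * t)
      = ∫⁻ t, (Set.Ioi b).indicator (fun t => F (a * t)) t := by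
        rw [lintegral_indicator measurableSet_Ioi]
    _ = ∫⁻ t, (Set.Ioi (a * b)).indicator F (a * t) := by
        exact lintegral_congr key
    _ = ∫⁻ s, (Set.Ioi (a * b)).indicator F s ∂(Measure.map (a * ·) volume) := by
        rw [lintegral_map (hF.indicator measurableSet_Ioi) (measurable_const_mul a)]
    _ = ENNReal.ofReal a⁻¹ * ∫⁻ s in Set.Ioi (a * b), F s := by
        rw [Real.map_volume_mul_left ha.ne', lintegral_smul_measure,
          abs_of_nonneg (inv_nonneg.2 ha.le), lintegral_indicator measurableSet_Ioi, smul_eq_mul]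

/-- Variant with the Jacobian factor included. -/
lemma stmt5_scale' (F : ℝ → ℝ≥0∞) (hF : Measurable F) {a : ℝ} (ha : 0 < a) (b : ℝ) :
    ∫⁻ t in Set.Ioi b, ENNReal.ofReal a * F (a * t) = ∫⁻ s in Set.Ioi (a * b), F s := by
  rw [lintegral_const_mul _ (show Measurable fun t => F (a * t) from hF.comp (measurable_const_mul a)), stmt5_scale F hF ha b,
    ← mul_assoc, ← ENNReal.ofReal_mul ha.le, mul_inv_cancel₀ ha.ne', ENNReal.ofReal_one, one_mul]

/-- A probability density on `(0,∞)` and its large dilations become asymptotically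
mutually singular in `L¹`: `∫₀^∞ |n·g(nt) − g(t)| dt → 2` as `n → ∞`. -/
theorem stmt5 (g : ℝ → ℝ) (hmeas : Measurable g)
    (hpos : ∀ᵐ t ∂(volume.restrict (Set.Ioi (0:ℝ))), 0 ≤ g t)
    (hint : ∫⁻ t in Set.Ioi (0:ℝ), ENNReal.ofReal (g t) = 1) :
    Tendsto
      (fun n : ℕ => ∫⁻ t in Set.Ioi (0:ℝ), ENNReal.ofReal |(n : ℝ) * g ((n : ℝ) * t) - g t|)
      atTop (nhds 2) := by
  set h : ℝ → ℝ≥0∞ := fun t => ENNReal.ofReal (g t) with hh_def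
  have hh : Measurable h := ENNReal.measurable_ofReal.comp hmeas
  set f : ℕ → ℝ → ℝ≥0∞ := fun n t => ENNReal.ofReal ((n : ℝ) * g ((n : ℝ) * t)) with hf_def
  have hfm : ∀ n : ℕ, Measurable (f n) :=
    fun n => ENNReal.measurable_ofReal.comp
      ((measurable_const.mul (hmeas.comp (measurable_const_mul _))))
  have hfh : ∀ n : ℕ, ∀ t : ℝ, f n t = ENNReal.ofReal (n : ℝ) * h ((n : ℝ) * t) := by
    intro n t
    simp [hf_def, hh_def, ENNReal.ofReal_mul (Nat.cast_nonneg n : (0:ℝ) ≤ n)]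
  -- integral of the dilation over `Ioi b` for `n ≥ 1`
  have hdil : ∀ n : ℕ, 1 ≤ n → ∀ b : ℝ,
      ∫⁻ t in Set.Ioi b, f n t = ∫⁻ s in Set.Ioi ((n : ℝ) * b), h s := by
    intro n hn b
    have hn0 : (0 : ℝ) < n := by exact_mod_cast hn
    calc ∫⁻ t in Set.Ioi b, f n t
        = ∫⁻ t in Set.Ioi b, ENNReal.ofReal (n : ℝ) * h ((n : ℝ) * t) := by
          exact lintegral_congr fun t => hfh n t
      _ = ∫⁻ s in Set.Ioi ((n : ℝ) * b), h s := stmt5_scale' h hh hn0 b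
  have hfi : ∀ n : ℕ, 1 ≤ n → ∫⁻ t in Set.Ioi (0:ℝ), f n t = 1 := by
    intro n hn
    rw [hdil n hn 0, mul_zero]; exact hint
  -- the density measure
  set ν : Measure ℝ := (volume.restrict (Set.Ioi (0:ℝ))).withDensity h with hν_def
  have hν_apply : ∀ s : Set ℝ, MeasurableSet s → s ⊆ Set.Ioi (0:ℝ) →
      ν s = ∫⁻ t in s, h t := by
    intro s hs hsub
    rw [hν_def, withDensity_apply _ hs, Measure.restrict_restrict hs,
      Set.inter_eq_self_of_subset_left hsub]
  have hν_univ : ν Set.univ = 1 := by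
    rw [hν_def, withDensity_apply _ MeasurableSet.univ, Measure.restrict_univ]; exact hint
  have hν_fin : ∀ s, ν s ≠ ⊤ := fun s =>
    ne_top_of_le_ne_top (by rw [hν_univ]; exact ENNReal.one_ne_top) (measure_mono (Set.subset_univ s))
  -- head: ν (Ioc 0 δ) small for small δ
  have hhead : Tendsto (fun k : ℕ => ν (Set.Ioc (0:ℝ) ((k:ℝ)+1)⁻¹)) atTop (𝓝 0) := by
    have hanti : Antitone (fun k : ℕ => Set.Ioc (0:ℝ) ((k:ℝ)+1)⁻¹) := by
      intro i j hij
      apply Set.Ioc_subset_Ioc_right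
      apply inv_anti₀ (by positivity)
      exact add_le_add_left (by exact_mod_cast hij) 1
    have hiInter : ⋂ k : ℕ, Set.Ioc (0:ℝ) ((k:ℝ)+1)⁻¹ = ∅ := by
      ext x
      simp only [Set.mem_iInter, Set.mem_Ioc, Set.mem_empty_iff_false, iff_false, not_forall]
      obtain ⟨k, hk⟩ := exists_nat_gt x⁻¹
      refine ⟨k, fun hcon => ?_⟩
      have hx0 : (0:ℝ) < x := hcon.1
      have h2 : ((((k:ℝ)+1)⁻¹)⁻¹ : ℝ) ≤ x⁻¹ := by
        apply inv_anti₀ hx0 hcon.2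
      rw [inv_inv] at h2
      linarith
    have := tendsto_measure_iInter_atTop (μ := ν)
      (fun k => (measurableSet_Ioc).nullMeasurableSet) hanti ⟨0, hν_fin _⟩
    rw [hiInter] at this
    simpa [Function.comp_def] using this
  -- tail: ν (Ioi c) small for large c
  have htail : Tendsto (fun k : ℕ => ν (Set.Ioi (k:ℝ))) atTop (𝓝 0) := by
    have hanti : Antitone (fun k : ℕ => Set.Ioi ((k:ℝ))) := by
      intro i j hij
      exact Set.Ioi_subset_Ioi (by exact_mod_cast hij)
    have hiInter : ⋂ k : ℕ, Set.Ioi ((k:ℝ)) = ∅ := by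
      ext x
      simp only [Set.mem_iInter, Set.mem_Ioi, Set.mem_empty_iff_false, iff_false, not_forall,
        not_lt]
      obtain ⟨k, hk⟩ := exists_nat_gt x
      exact ⟨k, hk.le⟩
    have := tendsto_measure_iInter_atTop (μ := ν)
      (fun k => (measurableSet_Ioi).nullMeasurableSet) hanti ⟨0, hν_fin _⟩
    rw [hiInter] at this
    simpa [Function.comp_def] using this
  -- M n := ∫ min (f n) h
  set M : ℕ → ℝ≥0∞ := fun n => ∫⁻ t in Set.Ioi (0:ℝ), min (f n t) (h t) with hM_def
  have hM_le_one : ∀ n, M n ≤ 1 := by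
    intro n
    calc M n ≤ ∫⁻ t in Set.Ioi (0:ℝ), h t := setLIntegral_mono' measurableSet_Ioi fun t _ => min_le_right _ _
      _ = 1 := hint
  -- M n → 0
  have hM0 : Tendsto M atTop (𝓝 0) := by
    rw [ENNReal.tendsto_atTop_zero]
    intro ε hε
    have hε2 : (0:ℝ≥0∞) < ε / 2 := ENNReal.half_pos hε.ne'
    obtain ⟨k₀, hk₀⟩ := (hhead.eventually (eventually_le_nhds hε2)).exists
    set δ : ℝ := ((k₀:ℝ)+1)⁻¹ with hδ_def
    have hδ0 : (0:ℝ) < δ := by positivity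
    obtain ⟨c₀, hc₀⟩ := ((htail.eventually (eventually_le_nhds hε2)).and
      (eventually_ge_atTop 1)).exists
    obtain ⟨N, hN⟩ := exists_nat_gt ((c₀ : ℝ) / δ)
    refine ⟨max N 1, fun n hn => ?_⟩
    have hn1 : 1 ≤ n := le_trans (le_max_right N 1) hn
    have hnN : N ≤ n := le_trans (le_max_left N 1) hn
    have hsplit : M n ≤ (∫⁻ t in Set.Ioc (0:ℝ) δ, min (f n t) (h t))
        + ∫⁻ t in Set.Ioi δ, min (f n t) (h t) := by
      rw [hM_def]
      have hunion : Set.Ioi (0:ℝ) = Set.Ioc (0:ℝ) δ ∪ Set.Ioi δ := by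
        rw [Set.Ioc_union_Ioi_eq_Ioi hδ0.le]
      rw [hunion]
      exact lintegral_union_le _ _ _
    have h1 : ∫⁻ t in Set.Ioc (0:ℝ) δ, min (f n t) (h t) ≤ ε / 2 := by
      calc ∫⁻ t in Set.Ioc (0:ℝ) δ, min (f n t) (h t)
          ≤ ∫⁻ t in Set.Ioc (0:ℝ) δ, h t :=
            setLIntegral_mono' measurableSet_Ioc fun t _ => min_le_right _ _
        _ = ν (Set.Ioc (0:ℝ) δ) :=
            (hν_apply _ measurableSet_Ioc fun x hx => hx.1).symm
        _ ≤ ε / 2 := hk₀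
    have h2 : ∫⁻ t in Set.Ioi δ, min (f n t) (h t) ≤ ε / 2 := by
      have hge : (c₀ : ℝ) ≤ (n : ℝ) * δ := by
        have : (c₀ : ℝ) / δ < (N : ℝ) := hN
        have hNn : (N : ℝ) ≤ (n : ℝ) := by exact_mod_cast hnN
        calc (c₀ : ℝ) = (c₀ : ℝ) / δ * δ := by field_simp
          _ ≤ (n : ℝ) * δ := by nlinarith
      calc ∫⁻ t in Set.Ioi δ, min (f n t) (h t)
          ≤ ∫⁻ t in Set.Ioi δ, f n t :=
            setLIntegral_mono' measurableSet_Ioi fun t _ => min_le_left _ _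
        _ = ∫⁻ s in Set.Ioi ((n:ℝ) * δ), h s := hdil n hn1 δ
        _ = ν (Set.Ioi ((n:ℝ) * δ)) := by
            refine (hν_apply _ measurableSet_Ioi fun x hx => ?_).symm
            exact lt_trans (mul_pos (Nat.cast_pos.2 hn1) hδ0) hx
        _ ≤ ν (Set.Ioi (c₀:ℝ)) := measure_mono (Set.Ioi_subset_Ioi hge)
        _ ≤ ε / 2 := hc₀.1
    calc M n ≤ ε / 2 + ε / 2 := le_trans hsplit (add_le_add h1 h2)
      _ = ε := ENNReal.add_halves ε
  -- the key identity: I n + 2 * M n = 2 for n ≥ 1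
  have hkey : ∀ n : ℕ, 1 ≤ n →
      (∫⁻ t in Set.Ioi (0:ℝ), ENNReal.ofReal |(n : ℝ) * g ((n : ℝ) * t) - g t|)
        = 2 - 2 * M n := by
    intro n hn
    have hn0 : (0 : ℝ) < n := by exact_mod_cast hn
    -- a.e. nonnegativity of g(nt) on Ioi 0
    have hpos' : ∀ᵐ t ∂(volume.restrict (Set.Ioi (0:ℝ))), 0 ≤ g ((n:ℝ) * t) := by
      have hpos_vol : ∀ᵐ t ∂(volume : Measure ℝ), t ∈ Set.Ioi (0:ℝ) → 0 ≤ g t :=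
        (ae_restrict_iff' measurableSet_Ioi).1 hpos
      have hqmp : Measure.QuasiMeasurePreserving (fun t : ℝ => (n:ℝ) * t) volume volume := by
        refine ⟨measurable_const_mul _, ?_⟩
        rw [Real.map_volume_mul_left hn0.ne']
        intro s hs
        simp [hs]
      have h1 := hqmp.ae hpos_vol
      have h2 := ae_restrict_of_ae (μ := volume) (s := Set.Ioi (0:ℝ)) h1
      filter_upwards [h2, ae_restrict_mem measurableSet_Ioi] with t ht htmem
      exact ht (Set.mem_Ioi.2 (mul_pos hn0 htmem))
    have hposae : ∀ᵐ t ∂(volume.restrict (Set.Ioi (0:ℝ))),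
        0 ≤ g t ∧ 0 ≤ g ((n:ℝ) * t) := hpos.and hpos'
    -- pointwise identity
    have hptwise : ∀ᵐ t ∂(volume.restrict (Set.Ioi (0:ℝ))),
        ENNReal.ofReal |(n : ℝ) * g ((n : ℝ) * t) - g t| + min (f n t) (h t)
          = max (f n t) (h t) := by
      refine hposae.mono fun t ⟨hg0, hgn0⟩ => ?_
      set a : ℝ := (n : ℝ) * g ((n : ℝ) * t) with ha_def
      have ha0 : 0 ≤ a := mul_nonneg (Nat.cast_nonneg n) hgn0
      have hfa : f n t = ENNReal.ofReal a := rfl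
      rcases le_total a (g t) with hab | hab
      · rw [abs_of_nonpos (by linarith), hfa]
        have hle : ENNReal.ofReal a ≤ ENNReal.ofReal (g t) := ENNReal.ofReal_le_ofReal hab
        rw [min_eq_left hle, max_eq_right hle, neg_sub, ENNReal.ofReal_sub _ ha0]
        exact tsub_add_cancel_of_le hle
      · rw [abs_of_nonneg (by linarith), hfa]
        have hle : ENNReal.ofReal (g t) ≤ ENNReal.ofReal a := ENNReal.ofReal_le_ofReal hab
        rw [min_eq_right hle, max_eq_left hle, ENNReal.ofReal_sub _ hg0]
        exact tsub_add_cancel_of_le hle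
    -- integrate
    have hI1 : (∫⁻ t in Set.Ioi (0:ℝ), ENNReal.ofReal |(n : ℝ) * g ((n : ℝ) * t) - g t|)
        + M n = ∫⁻ t in Set.Ioi (0:ℝ), max (f n t) (h t) := by
      rw [hM_def, ← lintegral_add_right _ ((hfm n).min hh)]
      exact lintegral_congr_ae hptwise
    have hI2 : (∫⁻ t in Set.Ioi (0:ℝ), max (f n t) (h t)) + M n = 2 := by
      rw [hM_def, ← lintegral_add_right _ ((hfm n).min hh)]
      have : ∀ t : ℝ, max (f n t) (h t) + min (f n t) (h t) = f n t + h t :=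
        fun t => max_add_min _ _
      rw [lintegral_congr fun t => this t, lintegral_add_left (hfm n), hfi n hn, hint]
      exact one_add_one_eq_two
    have hMfin : 2 * M n ≠ ⊤ := by
      refine ENNReal.mul_ne_top (by norm_num) ?_
      exact ne_top_of_le_ne_top ENNReal.one_ne_top (hM_le_one n)
    apply ENNReal.eq_sub_of_add_eq hMfin
    calc (∫⁻ t in Set.Ioi (0:ℝ), ENNReal.ofReal |(n : ℝ) * g ((n : ℝ) * t) - g t|) + 2 * M n
        = ((∫⁻ t in Set.Ioi (0:ℝ), ENNReal.ofReal |(n : ℝ) * g ((n : ℝ) * t) - g t|) + M n)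
          + M n := by ring
      _ = (∫⁻ t in Set.Ioi (0:ℝ), max (f n t) (h t)) + M n := by rw [hI1]
      _ = 2 := hI2
  -- conclude
  have hlim : Tendsto (fun n : ℕ => (2:ℝ≥0∞) - 2 * M n) atTop (𝓝 2) := by
    have h2M : Tendsto (fun n => 2 * M n) atTop (𝓝 0) := by
      have := ENNReal.Tendsto.const_mul hM0 (Or.inr (by norm_num : (2:ℝ≥0∞) ≠ ⊤))
      simpa using this
    have := ENNReal.Tendsto.sub (tendsto_const_nhds (x := (2:ℝ≥0∞))) h2M
      (Or.inr (by norm_num : (0:ℝ≥0∞) ≠ ⊤))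
    simpa using this
  refine Tendsto.congr' ?_ hlim
  filter_upwards [eventually_ge_atTop 1] with n hn
  exact (hkey n hn).symm
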